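/- Let n ≥ 2, let μ ∈ ℝⁿ have all entries strictly positive, and for each permutation η of {1,…,n} let f_{·,η} ∈ ℝⁿ have nonnegative entries with Σ_{l=1}^n f_{l,η} = 1. Assume the strict majorization condition Σ_{l=1}^m f_{l,η} < (Σ_{l=1}^m μ_{η(l)})/(Σ_{l=1}^n μ_l) for all m ∈ {1,…,n−1} and all η. Define δ* = min over η and l ∈ {1,…,n−1} of [(Σ_{r=1}^l μ_{η(r)})/(Σ_{r=1}^n μ_r) − Σ_{r=1}^l f_{r,η}] and ξ* = max over η and l ∈ {1,…,n−1} of [1 − Σ_{r=1}^l f_{r,η}]. Then δ* > 0 and ξ* > 0, and for any ε with 0 < ε < (δ*·Σ_r μ_r)/ξ*, any permutation η, setting Λ = Σ_{r=1}^n μ_r − ε and β₁ = Λ f_{1,η} − μ_{η(1)} + ε, β_l = Λ f_{l,η} − μ_{η(l)} for l ∈ {2,…,n}, one has Σ_{r=1}^l β_r ≤ −(δ*·Σ_r μ_r − ξ*·ε) < 0 for every l ∈ {1,…,n−1}, and Σ_{r=1}^n β_r = 0. -/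

import Mathlib

open Finset

/-- negative partial sums of the drift coefficients, Theorem 5.1. Under
the strict majorization condition, `δ* > 0`, `ξ* > 0`, and for every small enough `ε > 0`
and every permutation `η`, the drift coefficient vector `β` (with `β₁ = Λ f_{1,η} − μ_{η(1)} + ε`
and `β_l = Λ f_{l,η} − μ_{η(l)}` for `l ≥ 2`, where `Λ = Σ_r μ_r − ε`) has all proper partial
sums at most `−(δ*·Σ_r μ_r − ξ*·ε) < 0` and total sum zero. -/
theorem beta_partial_sums_negative
    (n : ℕ) (hn : 2 ≤ n) (μ : Fin n → ℝ) (hμ : ∀ l, 0 < μ l)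
    (f : Equiv.Perm (Fin n) → Fin n → ℝ)
    (hf0 : ∀ η l, 0 ≤ f η l)
    (hf1 : ∀ η, ∑ l, f η l = 1)
    (hmaj : ∀ (η : Equiv.Perm (Fin n)) (m : Fin n), (m : ℕ) < n - 1 →
      ∑ l ∈ Finset.univ.filter (· ≤ m), f η l
        < (∑ l ∈ Finset.univ.filter (· ≤ m), μ (η l)) / ∑ l, μ l)
    (δstar ξstar : ℝ)
    (hδ : δstar =
      Finset.inf'
        ((Finset.univ : Finset (Equiv.Perm (Fin n) × Fin n)).filter
          (fun p => (p.2 : ℕ) < n - 1))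
        ⟨(1, ⟨0, by omega⟩), by
          simp only [Finset.mem_filter, Finset.mem_univ, true_and]
          omega⟩
        (fun p => (∑ l ∈ Finset.univ.filter (· ≤ p.2), μ (p.1 l)) / (∑ l, μ l)
          - ∑ l ∈ Finset.univ.filter (· ≤ p.2), f p.1 l))
    (hξ : ξstar =
      Finset.sup'
        ((Finset.univ : Finset (Equiv.Perm (Fin n) × Fin n)).filter
          (fun p => (p.2 : ℕ) < n - 1))
        ⟨(1, ⟨0, by omega⟩), by
          simp only [Finset.mem_filter, Finset.mem_univ, true_and]
          omega⟩
        (fun p => 1 - ∑ l ∈ Finset.univ.filter (· ≤ p.2), f p.1 l)) :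
    0 < δstar ∧ 0 < ξstar ∧
    ∀ ε : ℝ, 0 < ε → ε < δstar * (∑ l, μ l) / ξstar →
    ∀ η : Equiv.Perm (Fin n),
      (∀ m : Fin n, (m : ℕ) < n - 1 →
        ∑ r ∈ Finset.univ.filter (· ≤ m),
            (((∑ l, μ l) - ε) * f η r - μ (η r) + if (r : ℕ) = 0 then ε else 0)
          ≤ -(δstar * (∑ l, μ l) - ξstar * ε)) ∧
      (-(δstar * (∑ l, μ l) - ξstar * ε) < 0) ∧
      (∑ r, (((∑ l, μ l) - ε) * f η r - μ (η r) + if (r : ℕ) = 0 then ε else 0) = 0) := by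

  haveI : NeZero n := ⟨by omega⟩
  set S : ℝ := ∑ l, μ l with hSdef
  have hS : 0 < S := Finset.sum_pos (fun l _ => hμ l) ⟨0, Finset.mem_univ 0⟩
  set s := ((Finset.univ : Finset (Equiv.Perm (Fin n) × Fin n)).filter
      (fun p => (p.2 : ℕ) < n - 1)) with hsdef
  have hsne : s.Nonempty := ⟨(1, ⟨0, by omega⟩), by
    simp only [hsdef, Finset.mem_filter, Finset.mem_univ, true_and]; omega⟩
  -- every element of s contributes a positive term to δ
  have hδpos : 0 < δstar := by
    rw [hδ]
    apply (Finset.lt_inf'_iff _).2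
    intro p hp
    have hp' : (p.2 : ℕ) < n - 1 := (Finset.mem_filter.mp hp).2
    have := hmaj p.1 p.2 hp'
    linarith
  -- f partial sums are < 1
  have hFlt1 : ∀ p ∈ s, ∑ l ∈ Finset.univ.filter (· ≤ p.2), f p.1 l < 1 := by
    intro p hp
    have hp' : (p.2 : ℕ) < n - 1 := (Finset.mem_filter.mp hp).2
    have h1 := hmaj p.1 p.2 hp'
    have hMle : (∑ l ∈ Finset.univ.filter (· ≤ p.2), μ (p.1 l)) ≤ S := by
      calc (∑ l ∈ Finset.univ.filter (· ≤ p.2), μ (p.1 l))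
          ≤ ∑ l, μ (p.1 l) := Finset.sum_le_sum_of_subset_of_nonneg
            (Finset.filter_subset _ _) (fun i _ _ => (hμ _).le)
        _ = S := Equiv.sum_comp p.1 μ
    have : (∑ l ∈ Finset.univ.filter (· ≤ p.2), μ (p.1 l)) / S ≤ 1 :=
      (div_le_one hS).mpr hMle
    linarith
  have hξpos : 0 < ξstar := by
    rw [hξ]
    obtain ⟨p, hp⟩ := hsne
    apply (Finset.lt_sup'_iff _).2
    exact ⟨p, hp, by linarith [hFlt1 p hp]⟩
  refine ⟨hδpos, hξpos, ?_⟩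
  intro ε hε hε2 η
  have hkey : δstar * S - ξstar * ε > 0 := by
    have := (lt_div_iff₀ hξpos).mp hε2
    nlinarith
  have hite : ∀ (T : Finset (Fin n)), (0 : Fin n) ∈ T →
      (∑ r ∈ T, (if (r : ℕ) = 0 then ε else 0)) = ε := by
    intro T hT
    have : ∀ r : Fin n, ((r : ℕ) = 0) = (r = 0) := by
      intro r; exact propext Fin.val_eq_zero_iff
    simp only [this]
    rw [Finset.sum_ite_eq' T (0 : Fin n) (fun _ => ε)]
    simp [hT]
  refine ⟨?_, by linarith, ?_⟩
  · intro m hm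
    have hps : (η, m) ∈ s := by
      simp only [hsdef, Finset.mem_filter, Finset.mem_univ, true_and]; exact hm
    set T := Finset.univ.filter (· ≤ m) with hT
    set F := ∑ l ∈ T, f η l with hF
    set M := ∑ l ∈ T, μ (η l) with hM
    have h0T : (0 : Fin n) ∈ T := by
      simp only [hT, Finset.mem_filter, Finset.mem_univ, true_and]
      exact Fin.zero_le m
    have hsum : ∑ r ∈ T, ((S - ε) * f η r - μ (η r) + if (r : ℕ) = 0 then ε else 0)
        = (S - ε) * F - M + ε := by
      rw [Finset.sum_add_distrib, Finset.sum_sub_distrib, ← Finset.mul_sum, hite T h0T]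
    rw [hsum]
    have hδle : δstar ≤ M / S - F := by
      rw [hδ]
      exact Finset.inf'_le _ hps
    have hξle : 1 - F ≤ ξstar := by
      rw [hξ]
      exact Finset.le_sup'
        (fun p : Equiv.Perm (Fin n) × Fin n =>
          1 - ∑ l ∈ Finset.univ.filter (· ≤ p.2), f p.1 l) hps
    have hM' : (δstar + F) * S ≤ M := by
      rw [← le_div_iff₀ hS]; linarith
    nlinarith [mul_le_mul_of_nonneg_left hξle hε.le]
  · have h1 : ∑ r, μ (η r) = S := Equiv.sum_comp η μ
    have h2 : ∑ r, f η r = 1 := hf1 η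
    rw [Finset.sum_add_distrib, Finset.sum_sub_distrib, ← Finset.mul_sum, h1, h2,
      hite Finset.univ (Finset.mem_univ 0)]
    ring
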